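/- Let J be a fixed real d×M matrix whose columns have Euclidean norm at most G (G ≥ 0), let w ∈ Δ_M be fixed, and let Y_1, Y_2 : Ω → ℝ^{d×M} be independent random matrices such that E‖Y_j − J‖_op ≤ α and E‖(Y_j − J)w‖ ≤ γ for j ∈ {1,2} (with the relevant integrability). Then E‖Y_1ᵀ Y_2 w‖ ≤ α·γ + α·G + √M·G·γ + √M·G². In particular, if α = √M·√c and γ = √c for some c ≥ 0, then E‖Y_1ᵀ Y_2 w‖ ≤ √M·(√c + G)². -/

import Mathlib

open MeasureTheory
open scoped BigOperators Matrix

/-- Euclidean norm of a vector in `ℝ^n`. -/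
noncomputable def eNorm {n : ℕ} (v : Fin n → ℝ) : ℝ :=
  Real.sqrt (∑ i, v i ^ 2)

/-- Operator norm of a real `d × M` matrix with respect to Euclidean norms. -/
noncomputable def opNorm {d M : ℕ} (A : Matrix (Fin d) (Fin M) ℝ) : ℝ :=
  ‖LinearMap.toContinuousLinearMap (Matrix.toEuclideanLin A)‖

/-- The (entrywise) measurable space structure on matrices. -/
instance matrixMeasurableSpace {m n α : Type*} [MeasurableSpace α] :
    MeasurableSpace (Matrix m n α) :=
  inferInstanceAs (MeasurableSpace (m → n → α))

open scoped Matrix.Norms.L2Operator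

lemma eNorm_eq_norm {n : ℕ} (v : Fin n → ℝ) :
    eNorm v = ‖(EuclideanSpace.equiv (Fin n) ℝ).symm v‖ := by
  rw [EuclideanSpace.norm_eq]
  simp [eNorm, Real.norm_eq_abs, sq_abs]

lemma opNorm_eq_norm {d M : ℕ} (A : Matrix (Fin d) (Fin M) ℝ) : opNorm A = ‖A‖ := rfl

lemma eNorm_nonneg {n : ℕ} (v : Fin n → ℝ) : 0 ≤ eNorm v := Real.sqrt_nonneg _

lemma opNorm_nonneg {d M : ℕ} (A : Matrix (Fin d) (Fin M) ℝ) : 0 ≤ opNorm A :=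
  norm_nonneg _

lemma eNorm_mulVec_le {d M : ℕ} (A : Matrix (Fin d) (Fin M) ℝ) (x : Fin M → ℝ) :
    eNorm (A.mulVec x) ≤ opNorm A * eNorm x := by
  rw [eNorm_eq_norm, eNorm_eq_norm, opNorm_eq_norm]
  exact A.l2_opNorm_mulVec ((EuclideanSpace.equiv (Fin M) ℝ).symm x)

lemma opNorm_transpose {d M : ℕ} (A : Matrix (Fin d) (Fin M) ℝ) :
    opNorm Aᵀ = opNorm A := by
  rw [opNorm_eq_norm, opNorm_eq_norm, ← Matrix.l2_opNorm_conjTranspose A]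
  congr 1

lemma eNorm_sum_le {n : ℕ} {ι : Type*} (s : Finset ι) (f : ι → Fin n → ℝ) :
    eNorm (∑ k ∈ s, f k) ≤ ∑ k ∈ s, eNorm (f k) := by
  simp_rw [eNorm_eq_norm]
  simp only [map_sum]
  exact norm_sum_le _ _

lemma eNorm_smul {n : ℕ} (c : ℝ) (v : Fin n → ℝ) : eNorm (c • v) = |c| * eNorm v := by
  simp_rw [eNorm_eq_norm]
  simp only [_root_.map_smul]
  rw [norm_smul, Real.norm_eq_abs]

lemma mulVec_eq_sum_cols {d M : ℕ} (A : Matrix (Fin d) (Fin M) ℝ) (x : Fin M → ℝ) :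
    A.mulVec x = ∑ k, x k • (fun i => A i k) := by
  ext i
  simp [Matrix.mulVec, dotProduct, Finset.sum_apply, mul_comm]

lemma eNorm_mulVec_le_abs_sum {d M : ℕ} {G : ℝ} (J : Matrix (Fin d) (Fin M) ℝ)
    (hJ : ∀ k : Fin M, eNorm (fun i => J i k) ≤ G) (x : Fin M → ℝ) :
    eNorm (J.mulVec x) ≤ (∑ k, |x k|) * G := by
  rw [mulVec_eq_sum_cols]
  refine (eNorm_sum_le _ _).trans ?_
  rw [Finset.sum_mul]
  refine Finset.sum_le_sum fun k _ => ?_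
  rw [eNorm_smul]
  exact mul_le_mul_of_nonneg_left (hJ k) (abs_nonneg _)

lemma abs_sum_le_sqrt_card {M : ℕ} (x : Fin M → ℝ) :
    ∑ k, |x k| ≤ Real.sqrt M * eNorm x := by
  have h := real_inner_le_norm ((EuclideanSpace.equiv (Fin M) ℝ).symm (fun _ => 1))
    ((EuclideanSpace.equiv (Fin M) ℝ).symm (fun k => |x k|))
  have h1 : (inner ℝ ((EuclideanSpace.equiv (Fin M) ℝ).symm (fun _ => (1:ℝ)))
      ((EuclideanSpace.equiv (Fin M) ℝ).symm (fun k => |x k|)) : ℝ) = ∑ k, |x k| := by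
    simp [PiLp.inner_apply]
  have h2 : ‖(EuclideanSpace.equiv (Fin M) ℝ).symm (fun _ => (1:ℝ))‖ = Real.sqrt M := by
    rw [EuclideanSpace.norm_eq]
    simp
  have h3 : ‖(EuclideanSpace.equiv (Fin M) ℝ).symm (fun k => |x k|)‖ = eNorm x := by
    rw [EuclideanSpace.norm_eq]
    simp [eNorm, sq_abs]
  rw [h1, h2, h3] at h
  exact h

lemma eNorm_le_of_simplex {d M : ℕ} {G : ℝ} (J : Matrix (Fin d) (Fin M) ℝ)
    (hJ : ∀ k : Fin M, eNorm (fun i => J i k) ≤ G)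
    {w : Fin M → ℝ} (hw : w ∈ stdSimplex ℝ (Fin M)) :
    eNorm (J.mulVec w) ≤ G := by
  refine (eNorm_mulVec_le_abs_sum J hJ w).trans ?_
  have : ∑ k, |w k| = 1 := by
    rw [← hw.2]
    exact Finset.sum_congr rfl fun k _ => abs_of_nonneg (hw.1 k)
  rw [this, one_mul]

lemma opNorm_le_sqrt_mul {d M : ℕ} {G : ℝ} (hG : 0 ≤ G) (J : Matrix (Fin d) (Fin M) ℝ)
    (hJ : ∀ k : Fin M, eNorm (fun i => J i k) ≤ G) :
    opNorm J ≤ Real.sqrt M * G := by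
  rw [opNorm]
  refine ContinuousLinearMap.opNorm_le_bound _ (by positivity) fun x => ?_
  have hx : (LinearMap.toContinuousLinearMap (Matrix.toEuclideanLin J)) x =
      (EuclideanSpace.equiv (Fin d) ℝ).symm (J.mulVec ((EuclideanSpace.equiv (Fin M) ℝ) x)) := by
    rfl
  rw [hx, ← eNorm_eq_norm]
  refine (eNorm_mulVec_le_abs_sum J hJ _).trans ?_
  have h := abs_sum_le_sqrt_card ((EuclideanSpace.equiv (Fin M) ℝ) x)
  have h2 : eNorm ((EuclideanSpace.equiv (Fin M) ℝ) x) = ‖x‖ := by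
    rw [eNorm_eq_norm]
    rfl
  rw [h2] at h
  calc (∑ k, |(EuclideanSpace.equiv (Fin M) ℝ) x k|) * G ≤ (Real.sqrt M * ‖x‖) * G :=
        mul_le_mul_of_nonneg_right h hG
    _ = Real.sqrt M * G * ‖x‖ := by ring

lemma continuous_opNorm {d M : ℕ} : Continuous fun A : Matrix (Fin d) (Fin M) ℝ => opNorm A := by
  have h : Continuous (((Matrix.toEuclideanLin (m := Fin d) (n := Fin M) (𝕜 := ℝ)).trans
      LinearMap.toContinuousLinearMap).toLinearMap) :=
    LinearMap.continuous_of_finiteDimensional _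
  exact continuous_norm.comp h

lemma continuous_eNorm_mulVec {d M : ℕ} (w : Fin M → ℝ) :
    Continuous fun A : Matrix (Fin d) (Fin M) ℝ => eNorm (A.mulVec w) := by
  unfold eNorm
  refine Real.continuous_sqrt.comp ?_
  refine continuous_finset_sum _ fun i _ => ?_
  refine Continuous.pow ?_ 2
  show Continuous fun A : Matrix (Fin d) (Fin M) ℝ => ∑ k, A i k * w k
  refine continuous_finset_sum _ fun k _ => ?_
  exact ((continuous_apply k).comp (continuous_apply (A := fun _ : Fin d => Fin M → ℝ) i)).mul continuous_const

lemma measurable_of_continuous_matrix {d M : ℕ} {f : Matrix (Fin d) (Fin M) ℝ → ℝ}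
    (hf : Continuous f) : Measurable f := by
  haveI : BorelSpace (Matrix (Fin d) (Fin M) ℝ) :=
    ⟨(inferInstance : BorelSpace (Fin d → Fin M → ℝ)).measurable_eq⟩
  exact hf.measurable

lemma eNorm_add_le {n : ℕ} (u v : Fin n → ℝ) : eNorm (u + v) ≤ eNorm u + eNorm v := by
  simp_rw [eNorm_eq_norm]
  simp only [map_add]
  exact norm_add_le _ _

lemma pointwise_bound {d M : ℕ} {G : ℝ} (hG : 0 ≤ G)
    (J A B : Matrix (Fin d) (Fin M) ℝ)
    (hJ : ∀ k : Fin M, eNorm (fun i => J i k) ≤ G)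
    {w : Fin M → ℝ} (hw : w ∈ stdSimplex ℝ (Fin M)) :
    eNorm (((A + J)ᵀ * (B + J)).mulVec w) ≤
      opNorm A * eNorm (B.mulVec w) + opNorm A * G
        + (Real.sqrt M * G) * eNorm (B.mulVec w) + Real.sqrt M * G ^ 2 := by
  have hJw : eNorm (J.mulVec w) ≤ G := eNorm_le_of_simplex J hJ hw
  have hopJ : opNorm J ≤ Real.sqrt M * G := opNorm_le_sqrt_mul hG J hJ
  have hexp : (A + J)ᵀ * (B + J) = Aᵀ*B + (Aᵀ*J + (Jᵀ*B + Jᵀ*J)) := by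
    simp only [Matrix.transpose_add, Matrix.add_mul, Matrix.mul_add]
    abel
  rw [hexp]
  simp only [Matrix.add_mulVec]
  have t1 : eNorm ((Aᵀ*B).mulVec w) ≤ opNorm A * eNorm (B.mulVec w) := by
    rw [← Matrix.mulVec_mulVec]
    exact (eNorm_mulVec_le _ _).trans_eq (by rw [opNorm_transpose])
  have t2 : eNorm ((Aᵀ*J).mulVec w) ≤ opNorm A * G := by
    rw [← Matrix.mulVec_mulVec]
    refine (eNorm_mulVec_le _ _).trans ?_
    rw [opNorm_transpose]
    exact mul_le_mul_of_nonneg_left hJw (opNorm_nonneg _)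
  have t3 : eNorm ((Jᵀ*B).mulVec w) ≤ (Real.sqrt M * G) * eNorm (B.mulVec w) := by
    rw [← Matrix.mulVec_mulVec]
    refine (eNorm_mulVec_le _ _).trans ?_
    rw [opNorm_transpose]
    exact mul_le_mul_of_nonneg_right hopJ (eNorm_nonneg _)
  have t4 : eNorm ((Jᵀ*J).mulVec w) ≤ Real.sqrt M * G ^ 2 := by
    rw [← Matrix.mulVec_mulVec]
    refine (eNorm_mulVec_le _ _).trans ?_
    rw [opNorm_transpose]
    have := mul_le_mul hopJ hJw (eNorm_nonneg _) (by positivity)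
    calc opNorm J * eNorm (J.mulVec w) ≤ (Real.sqrt M * G) * G := this
      _ = Real.sqrt M * G ^ 2 := by ring
  calc eNorm ((Aᵀ*B).mulVec w + ((Aᵀ*J).mulVec w + ((Jᵀ*B).mulVec w + (Jᵀ*J).mulVec w)))
      ≤ eNorm ((Aᵀ*B).mulVec w) + (eNorm ((Aᵀ*J).mulVec w)
          + (eNorm ((Jᵀ*B).mulVec w) + eNorm ((Jᵀ*J).mulVec w))) := by
        refine (eNorm_add_le _ _).trans ?_
        gcongr
        refine (eNorm_add_le _ _).trans ?_
        gcongr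
        exact eNorm_add_le _ _
    _ ≤ opNorm A * eNorm (B.mulVec w) + opNorm A * G
        + (Real.sqrt M * G) * eNorm (B.mulVec w) + Real.sqrt M * G ^ 2 := by
        linarith

/-- Let `J` be a fixed real `d × M` matrix whose columns have Euclidean norm
at most `G` (`G ≥ 0`), `w ∈ Δ_M` fixed, and `Y₁, Y₂` independent random matrices with
`E‖Yⱼ − J‖_op ≤ α` and `E‖(Yⱼ − J)w‖ ≤ γ` for `j ∈ {1,2}` (with the relevant integrability).
Then `E‖Y₁ᵀ Y₂ w‖ ≤ αγ + αG + √M·G·γ + √M·G²`; in particular, if `α = √M·√c` and `γ = √c`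
for some `c ≥ 0`, then `E‖Y₁ᵀ Y₂ w‖ ≤ √M·(√c + G)²`. -/

theorem stmt10 {Ω : Type*} [MeasurableSpace Ω] (μ : Measure Ω) [IsProbabilityMeasure μ]
    {d M : ℕ} {G α γ : ℝ} (hG : 0 ≤ G)
    (J : Matrix (Fin d) (Fin M) ℝ)
    (hJ : ∀ k : Fin M, eNorm (fun i => J i k) ≤ G)
    (w : Fin M → ℝ) (hw : w ∈ stdSimplex ℝ (Fin M))
    (Y₁ Y₂ : Ω → Matrix (Fin d) (Fin M) ℝ)
    (hY₁meas : Measurable Y₁) (hY₂meas : Measurable Y₂)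
    (hindep : ProbabilityTheory.IndepFun Y₁ Y₂ μ)
    (hIntOp₁ : Integrable (fun ω => opNorm (Y₁ ω - J)) μ)
    (hIntOp₂ : Integrable (fun ω => opNorm (Y₂ ω - J)) μ)
    (hIntVec₁ : Integrable (fun ω => eNorm ((Y₁ ω - J).mulVec w)) μ)
    (hIntVec₂ : Integrable (fun ω => eNorm ((Y₂ ω - J).mulVec w)) μ)
    (hα₁ : ∫ ω, opNorm (Y₁ ω - J) ∂μ ≤ α)
    (hα₂ : ∫ ω, opNorm (Y₂ ω - J) ∂μ ≤ α)
    (hγ₁ : ∫ ω, eNorm ((Y₁ ω - J).mulVec w) ∂μ ≤ γ)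
    (hγ₂ : ∫ ω, eNorm ((Y₂ ω - J).mulVec w) ∂μ ≤ γ) :
    (∫ ω, eNorm (((Y₁ ω)ᵀ * Y₂ ω).mulVec w) ∂μ ≤
      α * γ + α * G + Real.sqrt M * G * γ + Real.sqrt M * G ^ 2) ∧
    (∀ c : ℝ, 0 ≤ c → α = Real.sqrt M * Real.sqrt c → γ = Real.sqrt c →
      ∫ ω, eNorm (((Y₁ ω)ᵀ * Y₂ ω).mulVec w) ∂μ ≤
        Real.sqrt M * (Real.sqrt c + G) ^ 2) := by
  have hαnn : (0:ℝ) ≤ α := le_trans (integral_nonneg fun ω => opNorm_nonneg _) hα₁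
  have hγnn : (0:ℝ) ≤ γ := le_trans (integral_nonneg fun ω => eNorm_nonneg _) hγ₂
  have hMnn : (0:ℝ) ≤ Real.sqrt M := Real.sqrt_nonneg _
  set f₁ : Ω → ℝ := fun ω => opNorm (Y₁ ω - J) with hf₁
  set f₂ : Ω → ℝ := fun ω => eNorm ((Y₂ ω - J).mulVec w) with hf₂
  have hm1 : Measurable fun A : Matrix (Fin d) (Fin M) ℝ => opNorm (A - J) :=
    measurable_of_continuous_matrix (continuous_opNorm.comp (continuous_id.sub continuous_const))
  have hm2 : Measurable fun A : Matrix (Fin d) (Fin M) ℝ => eNorm ((A - J).mulVec w) :=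
    measurable_of_continuous_matrix
      ((continuous_eNorm_mulVec w).comp (continuous_id.sub continuous_const))
  have hind : ProbabilityTheory.IndepFun f₁ f₂ μ := hindep.comp hm1 hm2
  have hprod_int : Integrable (f₁ * f₂) μ := hind.integrable_mul hIntOp₁ hIntVec₂
  have hprod : ∫ ω, f₁ ω * f₂ ω ∂μ = (∫ ω, f₁ ω ∂μ) * ∫ ω, f₂ ω ∂μ :=
    hind.integral_mul_eq_mul_integral hIntOp₁.1 hIntVec₂.1
  have hint1nn : (0:ℝ) ≤ ∫ ω, f₁ ω ∂μ := integral_nonneg fun ω => opNorm_nonneg _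
  have hint2nn : (0:ℝ) ≤ ∫ ω, f₂ ω ∂μ := integral_nonneg fun ω => eNorm_nonneg _
  have hgint23 : Integrable (fun ω => (Real.sqrt M * G) * f₂ ω + Real.sqrt M * G ^ 2) μ :=
    (hIntVec₂.const_mul _).add (integrable_const _)
  have hgint123 : Integrable (fun ω => f₁ ω * G + ((Real.sqrt M * G) * f₂ ω
      + Real.sqrt M * G ^ 2)) μ := (hIntOp₁.mul_const G).add hgint23
  have hg_int : Integrable (fun ω => f₁ ω * f₂ ω + (f₁ ω * G + ((Real.sqrt M * G) * f₂ ω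
      + Real.sqrt M * G ^ 2))) μ := (hprod_int.add hgint123 : _)
  have hprod_int' : Integrable (fun ω => f₁ ω * f₂ ω) μ := hprod_int
  have hb : ∀ ω, eNorm (((Y₁ ω)ᵀ * Y₂ ω).mulVec w) ≤
      f₁ ω * f₂ ω + (f₁ ω * G + ((Real.sqrt M * G) * f₂ ω + Real.sqrt M * G ^ 2)) := by
    intro ω
    have h := pointwise_bound hG J (Y₁ ω - J) (Y₂ ω - J) hJ hw
    rw [sub_add_cancel, sub_add_cancel] at h
    simp only [hf₁, hf₂]
    linarith
  have key : ∫ ω, eNorm (((Y₁ ω)ᵀ * Y₂ ω).mulVec w) ∂μ ≤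
      α * γ + α * G + Real.sqrt M * G * γ + Real.sqrt M * G ^ 2 := by
    calc ∫ ω, eNorm (((Y₁ ω)ᵀ * Y₂ ω).mulVec w) ∂μ
        ≤ ∫ ω, (f₁ ω * f₂ ω + (f₁ ω * G + ((Real.sqrt M * G) * f₂ ω
            + Real.sqrt M * G ^ 2))) ∂μ :=
          integral_mono_of_nonneg (Filter.Eventually.of_forall fun ω => eNorm_nonneg _)
            hg_int (Filter.Eventually.of_forall hb)
      _ = (∫ ω, f₁ ω ∂μ) * (∫ ω, f₂ ω ∂μ) + ((∫ ω, f₁ ω ∂μ) * G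
            + ((Real.sqrt M * G) * (∫ ω, f₂ ω ∂μ) + Real.sqrt M * G ^ 2)) := by
          rw [integral_add hprod_int' hgint123, integral_add (hIntOp₁.mul_const G) hgint23,
            integral_add (hIntVec₂.const_mul _) (integrable_const _), hprod,
            integral_mul_const, integral_const_mul]
          simp
      _ ≤ α * γ + α * G + Real.sqrt M * G * γ + Real.sqrt M * G ^ 2 := by
          have h1 : ∫ ω, f₁ ω ∂μ ≤ α := hα₁
          have h2 : ∫ ω, f₂ ω ∂μ ≤ γ := hγ₂
          nlinarith [mul_nonneg hMnn hG]
  refine ⟨key, fun c hc hαc hγc => key.trans (le_of_eq ?_)⟩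
  rw [hαc, hγc]
  ring
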